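/- If 1 → N → G → Q → 1 is a short exact sequence of groups in which N and Q are finitely presented, then G is finitely presented. -/

import Mathlib

/-- A group is finitely presented if it is isomorphic to the quotient of a finitely
generated free group by the normal closure of a finite set of relations. -/
def FinitelyPresented (G : Type*) [Group G] : Prop :=
  ∃ (n : ℕ) (rels : Set (FreeGroup (Fin n))), rels.Finite ∧
    Nonempty (G ≃* FreeGroup (Fin n) ⧸ Subgroup.normalClosure rels)

section Aux

open Subgroup MonoidHom Function

lemma FP_elim {G : Type*} [Group G]
    (h : ∃ (n : ℕ) (rels : Set (FreeGroup (Fin n))), rels.Finite ∧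
      Nonempty (G ≃* FreeGroup (Fin n) ⧸ Subgroup.normalClosure rels)) :
    ∃ (n : ℕ) (f : FreeGroup (Fin n) →* G) (R : Set (FreeGroup (Fin n))),
      R.Finite ∧ Surjective f ∧ f.ker = Subgroup.normalClosure R := by
  obtain ⟨n, R, hR, ⟨e⟩⟩ := h
  refine ⟨n, (e.symm.toMonoidHom.comp (QuotientGroup.mk' (Subgroup.normalClosure R))), R, hR, ?_, ?_⟩
  · exact e.symm.surjective.comp (QuotientGroup.mk'_surjective _)
  · rw [← comap_ker, (ker_eq_bot_iff _).2 e.symm.injective, comap_bot, QuotientGroup.ker_mk']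

lemma FP_intro {G : Type*} [Group G] {α : Type} [Fintype α] [DecidableEq α]
    (f : FreeGroup α →* G) (T : Set (FreeGroup α))
    (hT : T.Finite) (hs : Surjective f) (hk : f.ker = Subgroup.normalClosure T) :
    ∃ (n : ℕ) (rels : Set (FreeGroup (Fin n))), rels.Finite ∧
      Nonempty (G ≃* FreeGroup (Fin n) ⧸ Subgroup.normalClosure rels) := by
  obtain ⟨m, ⟨e⟩⟩ : ∃ m, Nonempty (α ≃ Fin m) := ⟨Fintype.card α, ⟨Fintype.equivFin α⟩⟩
  let E := FreeGroup.freeGroupCongr e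
  refine ⟨m, E '' T, hT.image _, ⟨?_⟩⟩
  have h1 : (G ≃* FreeGroup α ⧸ Subgroup.normalClosure T) :=
    (QuotientGroup.quotientKerEquivOfSurjective f hs).symm.trans
      (QuotientGroup.quotientMulEquivOfEq hk)
  refine h1.trans (QuotientGroup.congr _ _ E ?_)
  exact Subgroup.map_normalClosure T E.toMonoidHom E.surjective

theorem extension_fp {G : Type*} [Group G] (N : Subgroup G) [N.Normal]
    (hN : ∃ (n : ℕ) (rels : Set (FreeGroup (Fin n))), rels.Finite ∧
      Nonempty ((↥N) ≃* FreeGroup (Fin n) ⧸ Subgroup.normalClosure rels))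
    (hQ : ∃ (n : ℕ) (rels : Set (FreeGroup (Fin n))), rels.Finite ∧
      Nonempty ((G ⧸ N) ≃* FreeGroup (Fin n) ⧸ Subgroup.normalClosure rels)) :
    ∃ (n : ℕ) (rels : Set (FreeGroup (Fin n))), rels.Finite ∧
      Nonempty (G ≃* FreeGroup (Fin n) ⧸ Subgroup.normalClosure rels) := by
  classical
  obtain ⟨n, fN, R, hRfin, hfN, hkN⟩ := FP_elim hN
  obtain ⟨m, fQ, S, hSfin, hfQ, hkQ⟩ := FP_elim hQ
  set π : G →* G ⧸ N := QuotientGroup.mk' N with hπ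
  have hkerπ : π.ker = N := QuotientGroup.ker_mk' N
  -- choose lifts of generators of Q
  choose g hg using fun j : Fin m => QuotientGroup.mk'_surjective N (fQ (FreeGroup.of j))
  let ι : FreeGroup (Fin n) →* FreeGroup (Fin n ⊕ Fin m) := FreeGroup.map Sum.inl
  let κ : FreeGroup (Fin m) →* FreeGroup (Fin n ⊕ Fin m) := FreeGroup.map Sum.inr
  let σ : FreeGroup (Fin m) →* G := FreeGroup.lift g
  let F : FreeGroup (Fin n ⊕ Fin m) →* G :=
    FreeGroup.lift (Sum.elim (fun i => (fN (FreeGroup.of i) : G)) g)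
  have hFι : ∀ a, F (ι a) = (fN a : G) := by
    have : F.comp ι = N.subtype.comp fN :=
      FreeGroup.ext_hom _ _ (by intro a; simp [F, ι, FreeGroup.map.of])
    intro a
    simpa using congrFun (congrArg (↑·) this) a
  have hFκ : ∀ b, F (κ b) = σ b := by
    have : F.comp κ = σ := FreeGroup.ext_hom _ _ (by intro b; simp [F, κ, σ, FreeGroup.map.of])
    intro b; simpa using congrFun (congrArg (↑·) this) b
  have hπσ : ∀ b, π (σ b) = fQ b := by
    have : π.comp σ = fQ := FreeGroup.ext_hom _ _ (by intro b; simp [σ, hg b]; exact hg b)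
    intro b; simpa using congrFun (congrArg (↑·) this) b
  -- lift elements of N along fN
  have liftN : ∀ z : G, z ∈ N → ∃ a : FreeGroup (Fin n), (fN a : G) = z := by
    intro z hz
    obtain ⟨a, ha⟩ := hfN ⟨z, hz⟩
    exact ⟨a, by rw [ha]⟩
  -- words for relators of Q
  have hwex : ∀ s : FreeGroup (Fin m), ∃ ws, s ∈ S → (fN ws : G) = σ s := by
    intro s
    by_cases hs : s ∈ S
    · have hmem : σ s ∈ N := by
        rw [← hkerπ, mem_ker] at *
        rw [hπσ s]
        have : s ∈ fQ.ker := hkQ ▸ Subgroup.subset_normalClosure hs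
        exact this
      obtain ⟨a, ha⟩ := liftN _ hmem
      exact ⟨a, fun _ => ha⟩
    · exact ⟨1, fun h => absurd h hs⟩
  choose w hw using hwex
  -- conjugation data
  let gg : Fin m → Bool → G := fun j b => if b then g j else (g j)⁻¹
  have hconjN : ∀ j i b, gg j b * (fN (FreeGroup.of i) : G) * (gg j b)⁻¹ ∈ N := by
    intro j i b
    cases b <;> simp only [gg, if_true, if_false, Bool.false_eq_true]
    · simpa using ‹N.Normal›.conj_mem _ (fN (FreeGroup.of i)).2 (g j)⁻¹
    · exact ‹N.Normal›.conj_mem _ (fN (FreeGroup.of i)).2 (g j)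
  choose c hc using fun j i b => liftN _ (hconjN j i b)
  let kgen : Fin m → Bool → FreeGroup (Fin n ⊕ Fin m) :=
    fun j b => if b then FreeGroup.of (Sum.inr j) else (FreeGroup.of (Sum.inr j))⁻¹
  have hFkgen : ∀ j b, F (kgen j b) = gg j b := by
    intro j b; cases b <;> simp [kgen, gg, F]
  -- the relator set
  let T1 : Set (FreeGroup (Fin n ⊕ Fin m)) := ι '' R
  let T2 : Set (FreeGroup (Fin n ⊕ Fin m)) := (fun s => κ s * (ι (w s))⁻¹) '' S
  let T3 : Set (FreeGroup (Fin n ⊕ Fin m)) :=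
    Set.range (fun p : Fin m × Fin n × Bool =>
      kgen p.1 p.2.2 * ι (FreeGroup.of p.2.1) * (kgen p.1 p.2.2)⁻¹ * (ι (c p.1 p.2.1 p.2.2))⁻¹)
  let T : Set (FreeGroup (Fin n ⊕ Fin m)) := T1 ∪ T2 ∪ T3
  have hTfin : T.Finite := ((hRfin.image _).union (hSfin.image _)).union (Set.finite_range _)
  set M : Subgroup (FreeGroup (Fin n ⊕ Fin m)) := Subgroup.normalClosure T with hM
  -- T is contained in the kernel of F
  have hT1ker : ∀ x ∈ T1, F x = 1 := by
    rintro _ ⟨r, hr, rfl⟩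
    rw [hFι]
    have : r ∈ fN.ker := hkN ▸ Subgroup.subset_normalClosure hr
    rw [mem_ker] at this
    rw [this]; rfl
  have hT2ker : ∀ x ∈ T2, F x = 1 := by
    rintro _ ⟨s, hs, rfl⟩
    rw [map_mul, map_inv, hFι, hFκ, hw s hs]
    group
  have hT3ker : ∀ x ∈ T3, F x = 1 := by
    rintro _ ⟨⟨j, i, b⟩, rfl⟩
    simp only [map_mul, map_inv, hFι, hFkgen, hc]
    group
  have hTker : T ⊆ (F.ker : Set _) := by
    rintro x (hx | hx)
    · rcases hx with hx | hx
      · exact mem_ker.2 (hT1ker x hx)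
      · exact mem_ker.2 (hT2ker x hx)
    · exact mem_ker.2 (hT3ker x hx)
  have hMker : M ≤ F.ker := Subgroup.normalClosure_le_normal hTker
  -- F is surjective
  have hFsurj : Surjective F := by
    intro x
    obtain ⟨b, hb⟩ := hfQ (π x)
    have hmem : x * (σ b)⁻¹ ∈ N := by
      rw [← hkerπ, mem_ker, map_mul, map_inv, hπσ, hb, mul_inv_cancel]
    obtain ⟨a, ha⟩ := liftN _ hmem
    refine ⟨ι a * κ b, ?_⟩
    rw [map_mul, hFι, hFκ, ha, inv_mul_cancel_right]
  -- the subgroup K = M ⊔ range ι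
  set K : Subgroup (FreeGroup (Fin n ⊕ Fin m)) := M ⊔ ι.range with hK
  have hMK : M ≤ K := le_sup_left
  have hιK : ι.range ≤ K := le_sup_right
  have hmemK : ∀ x ∈ K, ∃ u ∈ M, ∃ a : FreeGroup (Fin n), x = u * ι a := by
    intro x hx
    rw [← SetLike.mem_coe, hK, Subgroup.normal_mul] at hx
    obtain ⟨u, hu, v, hv, rfl⟩ := hx
    obtain ⟨a, rfl⟩ := hv
    exact ⟨u, hu, a, rfl⟩
  -- conjugation by kgen j b maps ι-range into K
  have hconjι : ∀ j b (a : FreeGroup (Fin n)), kgen j b * ι a * (kgen j b)⁻¹ ∈ K := by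
    intro j b
    let ψ : FreeGroup (Fin n) →* FreeGroup (Fin n ⊕ Fin m) :=
      (MulAut.conj (kgen j b)).toMonoidHom.comp ι
    have hψ : ψ.range ≤ K := by
      rw [MonoidHom.range_eq_map, ← FreeGroup.closure_range_of, MonoidHom.map_closure,
        Subgroup.closure_le]
      rintro _ ⟨_, ⟨i, rfl⟩, rfl⟩
      have ht : kgen j b * ι (FreeGroup.of i) * (kgen j b)⁻¹ * (ι (c j i b))⁻¹ ∈ M :=
        Subgroup.subset_normalClosure (Or.inr ⟨⟨j, i, b⟩, rfl⟩)
      have : (ψ (FreeGroup.of i) : FreeGroup (Fin n ⊕ Fin m)) =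
          (kgen j b * ι (FreeGroup.of i) * (kgen j b)⁻¹ * (ι (c j i b))⁻¹) * ι (c j i b) := by
        simp [ψ, MulAut.conj_apply]
        skip
      rw [SetLike.mem_coe, this]
      exact K.mul_mem (hMK ht) (hιK ⟨c j i b, rfl⟩)
    intro a
    exact hψ ⟨a, rfl⟩
  -- conjugation by kgen j b maps K into K
  have hconjK : ∀ j b, ∀ x ∈ K, kgen j b * x * (kgen j b)⁻¹ ∈ K := by
    intro j b x hx
    obtain ⟨u, hu, a, rfl⟩ := hmemK x hx
    have : kgen j b * (u * ι a) * (kgen j b)⁻¹ =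
        (kgen j b * u * (kgen j b)⁻¹) * (kgen j b * ι a * (kgen j b)⁻¹) := by group
    rw [this]
    exact K.mul_mem (hMK (Subgroup.normalClosure_normal.conj_mem _ hu _)) (hconjι j b a)
  -- K is normal
  have hKnormal : K.Normal := by
    have hnorm : Subgroup.normalizer (K : Set (FreeGroup (Fin n ⊕ Fin m))) = ⊤ := by
      rw [eq_top_iff, ← FreeGroup.closure_range_of, Subgroup.closure_le]
      rintro _ ⟨v, rfl⟩
      rcases v with i | j
      · exact Subgroup.le_normalizer (hιK ⟨FreeGroup.of i, rfl⟩)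
      · rw [SetLike.mem_coe, Subgroup.mem_normalizer_iff]
        intro h
        constructor
        · intro hh
          have := hconjK j true h hh
          simpa [kgen] using this
        · intro hh
          have := hconjK j false _ hh
          simp only [kgen, if_false, Bool.false_eq_true] at this
          have h2 : (FreeGroup.of (Sum.inr j))⁻¹ *
              (FreeGroup.of (Sum.inr j) * h * (FreeGroup.of (Sum.inr j))⁻¹) *
              ((FreeGroup.of (Sum.inr j))⁻¹)⁻¹ = h := by group
          rwa [h2] at this
    exact Subgroup.normalizer_eq_top_iff.mp hnorm
  -- K together with range κ is everything
  have htop : K ⊔ κ.range = ⊤ := by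
    rw [eq_top_iff, ← FreeGroup.closure_range_of, Subgroup.closure_le]
    rintro _ ⟨v, rfl⟩
    rcases v with i | j
    · have : FreeGroup.of (Sum.inl i) = ι (FreeGroup.of i) := by simp [ι]
      rw [SetLike.mem_coe, this]
      exact Subgroup.mem_sup_left (hιK ⟨FreeGroup.of i, rfl⟩)
    · have : FreeGroup.of (Sum.inr j) = κ (FreeGroup.of j) := by simp [κ]
      rw [SetLike.mem_coe, this]
      exact Subgroup.mem_sup_right ⟨FreeGroup.of j, rfl⟩
  -- κ of relators of Q lies in K
  have hκS : ∀ b ∈ fQ.ker, κ b ∈ K := by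
    have : Subgroup.normalClosure S ≤ K.comap κ := by
      haveI := hKnormal.comap κ
      apply Subgroup.normalClosure_le_normal
      intro s hs
      have ht : κ s * (ι (w s))⁻¹ ∈ M :=
        Subgroup.subset_normalClosure (Or.inl (Or.inr ⟨s, hs, rfl⟩))
      have : κ s = (κ s * (ι (w s))⁻¹) * ι (w s) := by group
      rw [SetLike.mem_coe, Subgroup.mem_comap, this]
      exact K.mul_mem (hMK ht) (hιK ⟨w s, rfl⟩)
    intro b hb
    rw [hkQ] at hb
    exact this hb
  -- ι of relators of N lies in M
  have hιR : ∀ a ∈ fN.ker, ι a ∈ M := by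
    have : Subgroup.normalClosure R ≤ M.comap ι := by
      haveI : M.Normal := Subgroup.normalClosure_normal
      haveI := this.comap ι
      apply Subgroup.normalClosure_le_normal
      intro r hr
      exact Subgroup.subset_normalClosure (Or.inl (Or.inl ⟨r, hr, rfl⟩))
    intro a ha
    rw [hkN] at ha
    exact this ha
  -- kernel of F equals M
  have hkerF : F.ker = M := by
    refine le_antisymm ?_ hMker
    intro q hq
    rw [mem_ker] at hq
    -- decompose q
    have hqtop : q ∈ K ⊔ κ.range := htop ▸ Subgroup.mem_top q
    haveI := hKnormal
    rw [← SetLike.mem_coe, Subgroup.normal_mul] at hqtop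
    obtain ⟨k, hk, _, ⟨b, rfl⟩, rfl⟩ := hqtop
    obtain ⟨u, hu, a, rfl⟩ := hmemK k hk
    have hu1 : F u = 1 := mem_ker.1 (hMker hu)
    have hprod : (fN a : G) * σ b = 1 := by
      rw [map_mul, map_mul, hu1, one_mul, hFι, hFκ] at hq; exact hq
    have hbker : b ∈ fQ.ker := by
      have h1 : π ((fN a : G)) = 1 := by
        rw [← mem_ker (f := π), hkerπ]; exact (fN a).2
      have h2 := congrArg π hprod
      rw [map_mul, h1, one_mul, hπσ, map_one] at h2
      exact mem_ker.2 h2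
    obtain ⟨u₂, hu₂, a₂, hbeq⟩ := hmemK _ (hκS b hbker)
    have hu2 : F u₂ = 1 := mem_ker.1 (hMker hu₂)
    simp only [] at hq ⊢
    rw [hbeq] at hq ⊢
    have hfa : ((fN a : G) * (fN a₂ : G)) = 1 := by
      have h3 := hq
      rw [map_mul, map_mul, map_mul, hu1, hu2, one_mul, one_mul, hFι, hFι] at h3
      exact h3
    have haker : a * a₂ ∈ fN.ker := by
      rw [mem_ker]
      apply Subtype.ext
      push_cast
      rw [map_mul]
      exact_mod_cast hfa
    have hιaa : ι (a * a₂) ∈ M := hιR _ haker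
    have hrw : u * ι a * (u₂ * ι a₂) = (u * (ι a * u₂ * (ι a)⁻¹)) * ι (a * a₂) := by
      rw [map_mul]; group
    rw [hrw]
    exact M.mul_mem (M.mul_mem hu (Subgroup.normalClosure_normal.conj_mem _ hu₂ _)) hιaa
  exact FP_intro F T hTfin hFsurj (hkerF.trans hM)


end Aux

/-- If `1 → N → G → G/N → 1` is a short exact sequence of groups with `N` and `G/N`
finitely presented, then `G` is finitely presented. -/
theorem stmt2 {G : Type*} [Group G] (N : Subgroup G) [N.Normal]
    (hN : FinitelyPresented N) (hQ : FinitelyPresented (G ⧸ N)) :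
    FinitelyPresented G := extension_fp N hN hQ
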